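/- Let v₁, v₂, v₃ be positive real numbers, V₁, V₂, V₃ real numbers and c, c̃ real constants with c ≠ c̃, satisfying the system (⋆). If v₁ = v₂, then v₃ = 1, c > c̃, V₃² = (c − c̃)/2, V₁ = −((1 + v₁²)/(2v₁)) V₃ and V₂ = ((1 − v₁²)/(2v₁)) V₃. -/
import Mathlib

/-- under the system (⋆) with c ≠ c̃ and vᵢ > 0, if v₁ = v₂ then
v₃ = 1, c > c̃, V₃² = (c − c̃)/2, V₁ = −((1 + v₁ ^ 2) / (2 * v₁)) V₃ and
V₂ = ((1 − v₁ ^ 2) / (2 * v₁)) V₃. -/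
theorem stmt_8 (v₁ v₂ v₃ V₁ V₂ V₃ c ct : ℝ)
    (hv₁ : 0 < v₁) (hv₂ : 0 < v₂) (hv₃ : 0 < v₃) (hc : c ≠ ct)
    (h0 : v₁ ^ 2 - v₂ ^ 2 + v₃ ^ 2 = 1)
    (h1 : v₁ * V₁ - v₂ * V₂ + v₃ * V₃ = 0)
    (h2 : V₁ ^ 2 - V₂ ^ 2 + V₃ ^ 2 = c - ct)
    (h3 : V₁ / v₁ + V₂ / v₂ + V₃ / v₃ = 0)
    (h12 : v₁ = v₂) :
    v₃ = 1 ∧ c > ct ∧ V₃ ^ 2 = (c - ct) / 2 ∧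
      V₁ = -((1 + v₁ ^ 2) / (2 * v₁)) * V₃ ∧
      V₂ = ((1 - v₁ ^ 2) / (2 * v₁)) * V₃ := by
  subst h12
  have hv3 : v₃ = 1 := by nlinarith
  subst hv3
  have hne : v₁ ≠ 0 := ne_of_gt hv₁
  have h3' : V₁ + V₂ + V₃ * v₁ = 0 := by
    field_simp at h3
    nlinarith [sq_nonneg v₁]
  have hsub : V₁ - V₂ = -V₃ / v₁ := by
    field_simp
    linarith
  have hV1 : V₁ = -((1 + v₁ ^ 2) / (2 * v₁)) * V₃ := by
    field_simp
    nlinarith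
  have hV2 : V₂ = ((1 - v₁ ^ 2) / (2 * v₁)) * V₃ := by
    field_simp
    nlinarith
  have hd : V₁ ^ 2 - V₂ ^ 2 = V₃ ^ 2 := by
    rw [hV1, hV2]; field_simp; ring
  have hsq : 2 * V₃ ^ 2 = c - ct := by linarith
  have hV3ne : V₃ ≠ 0 := by
    intro h
    apply hc
    have : V₁ = 0 := by rw [hV1, h]; ring
    have hV2' : V₂ = 0 := by rw [hV2, h]; ring
    nlinarith
  have hpos : c - ct > 0 := by nlinarith [sq_nonneg V₃, pow_pos (abs_pos.mpr hV3ne) 2, sq_abs V₃]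
  refine ⟨rfl, by linarith, by linarith, hV1, hV2⟩
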